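/- There exists a finite simple connected graph G with at least two vertices such that μ(G) > max over all pairs of adjacent vertices v_i ~ v_j of G of (m_i² + 4·m_i·m_j + m_j² − (d_i·m_i + d_j·m_j))/(d_i + d_j). (This disproves conjectured edge-maximum bound 66 of Brankov, Hansen and Stevanović.) -/

import Mathlib

noncomputable section

open Finset

/-- The degree of a vertex, as a real number. -/
def degR {V : Type*} [Fintype V] (G : SimpleGraph V) (v : V) : ℝ :=
  letI := Classical.decRel G.Adj
  (G.degree v : ℝ)

/-- The average degree of the neighbours of a vertex, as a real number:
`m_v = (∑_{u ~ v} d_u) / d_v`. -/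
def avgDegR {V : Type*} [Fintype V] (G : SimpleGraph V) (v : V) : ℝ :=
  letI := Classical.decRel G.Adj
  (∑ u ∈ G.neighborFinset v, (G.degree u : ℝ)) / (G.degree v : ℝ)

/-- The largest eigenvalue of the Laplacian matrix `L = D - A` of a finite graph. -/
def lapSpecRad {V : Type*} [Fintype V] [DecidableEq V] [Nonempty V]
    (G : SimpleGraph V) : ℝ :=
  letI := Classical.decRel G.Adj
  ⨆ i, (SimpleGraph.posSemidef_lapMatrix ℝ G).isHermitian.eigenvalues i

/- ### Auxiliary material -/

/-- Trace of a power of a real symmetric matrix is the power sum of its eigenvalues. -/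
lemma trace_pow_eq {n : Type*} [Fintype n] [DecidableEq n] {A : Matrix n n ℝ}
    (hA : A.IsHermitian) (k : ℕ) :
    (A ^ k).trace = ∑ i, hA.eigenvalues i ^ k := by
  set U := (hA.eigenvectorUnitary : Matrix n n ℝ) with hUdef
  set D : Matrix n n ℝ := Matrix.diagonal (RCLike.ofReal ∘ hA.eigenvalues) with hDdef
  have hsU : star U * U = 1 := Unitary.coe_star_mul_self hA.eigenvectorUnitary
  have hUs : U * star U = 1 := Unitary.coe_mul_star_self hA.eigenvectorUnitary
  have key : A ^ k = U * D ^ k * star U := by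
    induction k with
    | zero => simpa [pow_zero] using hUs.symm
    | succ k ih =>
        rw [pow_succ, ih, pow_succ]
        conv_lhs => rw [hA.spectral_theorem, Unitary.conjStarAlgAut_apply]
        rw [← hUdef, ← hDdef]
        calc U * D ^ k * star U * (U * D * star U)
            = U * D ^ k * (star U * U) * D * star U := by
              simp only [Matrix.mul_assoc]
          _ = U * (D ^ k * D) * star U := by rw [hsU]; simp only [Matrix.mul_one, Matrix.mul_assoc]
  rw [key, Matrix.trace_mul_cycle, hsU, Matrix.one_mul,
    Matrix.diagonal_pow, Matrix.trace_diagonal]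
  simp [RCLike.ofReal]

/-- Lower bound on the largest eigenvalue of a positive semidefinite real matrix via a
ratio of traces of consecutive powers. -/
lemma ciSup_eigenvalues_lower {n : Type*} [Fintype n] [DecidableEq n] [Nonempty n]
    {A : Matrix n n ℝ} (hA : A.PosSemidef) (c t t' : ℝ) (k : ℕ)
    (h1 : (A ^ k).trace = t) (h2 : (A ^ (k + 1)).trace = t')
    (h3 : 0 < t) (h4 : c * t < t') :
    c < ⨆ i, hA.isHermitian.eigenvalues i := by
  set S := ⨆ i, hA.isHermitian.eigenvalues i with hS
  have hbdd : BddAbove (Set.range hA.isHermitian.eigenvalues) :=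
    (Set.finite_range _).bddAbove
  have hle : ∀ i, hA.isHermitian.eigenvalues i ≤ S := fun i => le_ciSup hbdd i
  have hnn : ∀ i, 0 ≤ hA.isHermitian.eigenvalues i := hA.eigenvalues_nonneg
  have hsum : t' ≤ S * t := by
    rw [← h1, ← h2, trace_pow_eq hA.isHermitian, trace_pow_eq hA.isHermitian,
      Finset.mul_sum]
    refine Finset.sum_le_sum fun i _ => ?_
    rw [pow_succ, mul_comm]
    exact mul_le_mul (hle i) le_rfl (pow_nonneg (hnn i) k) (le_trans (hnn i) (hle i))
  have : c * t < S * t := lt_of_lt_of_le h4 hsum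
  exact lt_of_mul_lt_mul_right this h3.le

lemma lap_map {V : Type*} [Fintype V] [DecidableEq V] (G : SimpleGraph V) [DecidableRel G.Adj] :
    (G.lapMatrix ℤ).map (Int.cast : ℤ → ℝ) = G.lapMatrix ℝ := by
  ext i j
  simp [SimpleGraph.lapMatrix, SimpleGraph.degMatrix, SimpleGraph.adjMatrix,
    Matrix.sub_apply, Matrix.map_apply, Matrix.diagonal_apply, apply_ite (Int.cast : ℤ → ℝ)]

lemma map_pow_int {n : Type*} [Fintype n] [DecidableEq n] (M : Matrix n n ℤ) (k : ℕ) :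
    (M.map (Int.cast : ℤ → ℝ)) ^ k = (M ^ k).map (Int.cast : ℤ → ℝ) := by
  induction k with
  | zero =>
      ext i j
      simp [Matrix.map_apply, Matrix.one_apply, apply_ite (Int.cast : ℤ → ℝ)]
  | succ k ih =>
      rw [pow_succ, pow_succ, ih]
      ext i j
      simp [Matrix.mul_apply, Matrix.map_apply]

lemma trace_map_int {n : Type*} [Fintype n] (M : Matrix n n ℤ) :
    (M.map (Int.cast : ℤ → ℝ)).trace = (M.trace : ℝ) := by
  simp [Matrix.trace, Matrix.map_apply]

lemma degR_eq {V : Type*} [Fintype V] (G : SimpleGraph V) [DecidableRel G.Adj] (v : V) :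
    degR G v = (G.degree v : ℝ) := by
  unfold degR
  congr!

lemma avgDegR_eq {V : Type*} [Fintype V] (G : SimpleGraph V) [DecidableRel G.Adj] (v : V) :
    avgDegR G v = ((∑ u ∈ G.neighborFinset v, G.degree u : ℕ) : ℝ) / (G.degree v : ℝ) := by
  unfold avgDegR
  push_cast
  congr!

/- ### The counterexample graph: a spider with three legs of length 3 -/

def eB : Fin 10 → Fin 10 → Bool := fun i j =>
  decide ((i.val, j.val) ∈ [(0,1),(1,0),(1,2),(2,1),(2,3),(3,2),(0,4),(4,0),(4,5),(5,4),
    (5,6),(6,5),(0,7),(7,0),(7,8),(8,7),(8,9),(9,8)])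

def Gc : SimpleGraph (Fin 10) where
  Adj i j := eB i j = true
  symm := ⟨fun i j h => (by decide : ∀ i j : Fin 10, eB i j = true → eB j i = true) i j h⟩
  loopless := ⟨fun i h => (by decide : ∀ i : Fin 10, ¬ eB i i = true) i h⟩

instance : DecidableRel Gc.Adj := fun i j => inferInstanceAs (Decidable (eB i j = true))

def Lz : Matrix (Fin 10) (Fin 10) ℤ :=
  !![3,-1,0,0,-1,0,0,-1,0,0;
     -1,2,-1,0,0,0,0,0,0,0;
     0,-1,2,-1,0,0,0,0,0,0;
     0,0,-1,1,0,0,0,0,0,0;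
     -1,0,0,0,2,-1,0,0,0,0;
     0,0,0,0,-1,2,-1,0,0,0;
     0,0,0,0,0,-1,1,0,0,0;
     -1,0,0,0,0,0,0,2,-1,0;
     0,0,0,0,0,0,0,-1,2,-1;
     0,0,0,0,0,0,0,0,-1,1]

def M2 : Matrix (Fin 10) (Fin 10) ℤ :=
  !![12,-5,1,0,-5,1,0,-5,1,0;
     -5,6,-4,1,1,0,0,1,0,0;
     1,-4,6,-3,0,0,0,0,0,0;
     0,1,-3,2,0,0,0,0,0,0;
     -5,1,0,0,6,-4,1,1,0,0;
     1,0,0,0,-4,6,-3,0,0,0;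
     0,0,0,0,1,-3,2,0,0,0;
     -5,1,0,0,1,0,0,6,-4,1;
     1,0,0,0,0,0,0,-4,6,-3;
     0,0,0,0,0,0,0,1,-3,2]
def M3 : Matrix (Fin 10) (Fin 10) ℤ :=
  !![51,-23,7,-1,-23,7,-1,-23,7,-1;
     -23,21,-15,5,7,-1,0,7,-1,0;
     7,-15,19,-9,-1,0,0,-1,0,0;
     -1,5,-9,5,0,0,0,0,0,0;
     -23,7,-1,0,21,-15,5,7,-1,0;
     7,-1,0,0,-15,19,-9,-1,0,0;
     -1,0,0,0,5,-9,5,0,0,0;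
     -23,7,-1,0,7,-1,0,21,-15,5;
     7,-1,0,0,-1,0,0,-15,19,-9;
     -1,0,0,0,0,0,0,5,-9,5]
def M6 : Matrix (Fin 10) (Fin 10) ℤ :=
  !![4338,-2102,890,-234,-2102,890,-234,-2102,890,-234;
     -2102,1320,-820,288,903,-313,67,903,-313,67;
     890,-820,718,-298,-313,80,-12,-313,80,-12;
     -234,288,-298,132,67,-12,1,67,-12,1;
     -2102,903,-313,67,1320,-820,288,903,-313,67;
     890,-313,80,-12,-820,718,-298,-313,80,-12;
     -234,67,-12,1,288,-298,132,67,-12,1;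
     -2102,903,-313,67,903,-313,67,1320,-820,288;
     890,-313,80,-12,-313,80,-12,-820,718,-298;
     -234,67,-12,1,67,-12,1,288,-298,132]
def M12 : Matrix (Fin 10) (Fin 10) ℤ :=
  !![34614024,-17075016,7757080,-2220072,-17075016,7757080,-2220072,-17075016,7757080,-2220072;
     -17075016,8751882,-4244730,1283052,8272103,-3646639,1016942,8272103,-3646639,1016942;
     7757080,-4244730,2277854,-741606,-3646639,1531965,-409625,-3646639,1531965,-409625;
     -2220072,1283052,-741606,253196,1016942,-409625,105398,1016942,-409625,105398;
     -17075016,8272103,-3646639,1016942,8751882,-4244730,1283052,8272103,-3646639,1016942;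
     7757080,-3646639,1531965,-409625,-4244730,2277854,-741606,-3646639,1531965,-409625;
     -2220072,1016942,-409625,105398,1283052,-741606,253196,1016942,-409625,105398;
     -17075016,8272103,-3646639,1016942,8272103,-3646639,1016942,8751882,-4244730,1283052;
     7757080,-3646639,1531965,-409625,-3646639,1531965,-409625,-4244730,2277854,-741606;
     -2220072,1016942,-409625,105398,1016942,-409625,105398,1283052,-741606,253196]
def M13 : Matrix (Fin 10) (Fin 10) ℤ :=
  !![155067120,-76521136,34809248,-9977152,-76521136,34809248,-9977152,-76521136,34809248,-9977152;
     -76521136,38823510,-18524394,5527782,37265861,-16582323,4663581,37265861,-16582323,4663581;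
     34809248,-18524394,9542044,-3019460,-16582323,7120194,-1941590,-16582323,7120194,-1941590;
     -9977152,5527782,-3019460,994802,4663581,-1941590,515023,4663581,-1941590,515023;
     -76521136,37265861,-16582323,4663581,38823510,-18524394,5527782,37265861,-16582323,4663581;
     34809248,-16582323,7120194,-1941590,-18524394,9542044,-3019460,-16582323,7120194,-1941590;
     -9977152,4663581,-1941590,515023,5527782,-3019460,994802,4663581,-1941590,515023;
     -76521136,37265861,-16582323,4663581,37265861,-16582323,4663581,38823510,-18524394,5527782;
     34809248,-16582323,7120194,-1941590,-16582323,7120194,-1941590,-18524394,9542044,-3019460;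
     -9977152,4663581,-1941590,515023,4663581,-1941590,515023,5527782,-3019460,994802]

lemma hLz : Gc.lapMatrix ℤ = Lz := by decide
lemma h2 : Lz * Lz = M2 := by decide
lemma h3 : M2 * Lz = M3 := by decide
lemma h6 : M3 * M3 = M6 := by decide
lemma h12 : M6 * M6 = M12 := by decide
lemma h13 : M12 * Lz = M13 := by decide
lemma ht12 : M12.trace = 68462820 := by decide
lemma ht13 : M13.trace = 303148188 := by decide

lemma hLz3 : Lz ^ 3 = M3 := by
  rw [show (3:ℕ) = 2+1 from rfl, pow_succ, pow_two, h2, h3]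

lemma hLz12 : Lz ^ 12 = M12 := by
  rw [show (12:ℕ) = 3*2*2 from rfl, pow_mul, pow_mul, hLz3, pow_two, pow_two, h6, h12]

lemma hLz13 : Lz ^ 13 = M13 := by
  rw [pow_succ, hLz12, h13]

lemma Gc_connected : Gc.Connected := by
  have h0 : ∀ v : Fin 10, Gc.Reachable 0 v := by
    have a01 : Gc.Adj 0 1 := by decide
    have a12 : Gc.Adj 1 2 := by decide
    have a23 : Gc.Adj 2 3 := by decide
    have a04 : Gc.Adj 0 4 := by decide
    have a45 : Gc.Adj 4 5 := by decide
    have a56 : Gc.Adj 5 6 := by decide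
    have a07 : Gc.Adj 0 7 := by decide
    have a78 : Gc.Adj 7 8 := by decide
    have a89 : Gc.Adj 8 9 := by decide
    intro v
    fin_cases v
    · exact SimpleGraph.Reachable.refl 0
    · exact a01.reachable
    · exact a01.reachable.trans a12.reachable
    · exact (a01.reachable.trans a12.reachable).trans a23.reachable
    · exact a04.reachable
    · exact a04.reachable.trans a45.reachable
    · exact (a04.reachable.trans a45.reachable).trans a56.reachable
    · exact a07.reachable
    · exact a07.reachable.trans a78.reachable
    · exact (a07.reachable.trans a78.reachable).trans a89.reachable
  exact SimpleGraph.Connected.mk (fun u v => (h0 u).symm.trans (h0 v))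

lemma Gc_deg : ∀ v, Gc.degree v = ![3,2,2,1,2,2,1,2,2,1] v := by decide

lemma Gc_sum : ∀ v, (∑ u ∈ Gc.neighborFinset v, Gc.degree u) = ![6,5,3,2,5,3,2,5,3,2] v := by
  decide

lemma Gc_degR : ∀ v, degR Gc v = ![3,2,2,1,2,2,1,2,2,1] v := by
  intro v
  rw [degR_eq, Gc_deg]
  fin_cases v <;> norm_num

lemma Gc_avgDegR : ∀ v, avgDegR Gc v = ![2,5/2,3/2,2,5/2,3/2,2,5/2,3/2,2] v := by
  intro v
  rw [avgDegR_eq, Gc_sum, Gc_deg]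
  fin_cases v <;> norm_num

lemma Gc_bound : (53 : ℝ) / 12 < lapSpecRad Gc := by
  unfold lapSpecRad
  letI inst := Classical.decRel Gc.Adj
  have hlapR : Gc.lapMatrix ℝ = Lz.map (Int.cast : ℤ → ℝ) := by
    rw [Subsingleton.elim inst (instDecidableRelFinOfNatNatAdjGc : DecidableRel Gc.Adj)]
    rw [← lap_map, hLz]
  refine ciSup_eigenvalues_lower (SimpleGraph.posSemidef_lapMatrix ℝ Gc) ((53 : ℝ) / 12)
    68462820 303148188 12 ?_ ?_ (by norm_num) (by norm_num)
  · rw [hlapR]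
    rw [map_pow_int, hLz12, trace_map_int, ht12]
    norm_num
  · rw [hlapR]
    rw [map_pow_int, hLz13, trace_map_int, ht13]
    norm_num

/-- There exists a finite simple connected graph `G` with at least two vertices whose
Laplacian spectral radius exceeds the conjectured edge-maximum bound. -/
theorem exists_counterexample_bound66 :
    ∃ (V : Type) (_ : Fintype V) (_ : DecidableEq V) (_ : Nonempty V)
      (G : SimpleGraph V), G.Connected ∧ 2 ≤ Fintype.card V ∧
      ∀ i j : V, G.Adj i j →
        (fun di mi dj mj => (mi ^ 2 + 4 * mi * mj + mj ^ 2 - (di * mi + dj * mj)) / (di + dj))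
          (degR G i) (avgDegR G i) (degR G j) (avgDegR G j) < lapSpecRad G := by
  refine ⟨Fin 10, inferInstance, inferInstance, inferInstance, Gc, Gc_connected, by norm_num, ?_⟩
  intro i j hadj
  simp only
  refine lt_of_le_of_lt ?_ Gc_bound
  rw [Gc_degR, Gc_degR, Gc_avgDegR, Gc_avgDegR]
  revert hadj
  fin_cases i <;> fin_cases j <;> intro hadj <;>
    first
      | exact absurd hadj (by decide)
      | norm_num
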